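/- Let α be an assembly producible at temperature τ in the hierarchical model, realized by an assembly tree Υ (so Υ is a hierarchical division of dom α in which the two children sets of every internal node have attachment strength at least τ in α). If a merging process maintains a partition 𝒞 of dom α, initialized to singletons, and repeatedly replaces any two parts with attachment strength at least τ by their union, then at every step with |𝒞| > 1 such a mergeable pair exists, and moreover the sequence of merges performed itself determines an assembly tree of α; hence the process always terminates with the partition {dom α} and constitutes a correct decision procedure for producibility of α. -/

import Mathlib

/-- A tile system over a type `T` of tile types: each tile type has, in each
direction (unit vector of `ℤ × ℤ`), a glue label (a natural number `ℕ`), and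
each glue label has a nonnegative integer strength given by `str`. -/
structure TileSystem (T : Type) where
  glue : T → ℤ × ℤ → ℕ
  str : ℕ → ℕ

/-- The four unit-vector directions of `ℤ²`. -/
def dirs : Finset (ℤ × ℤ) := {(0,1), (0,-1), (1,0), (-1,0)}

/-- An assembly: a partial function from `ℤ²` to tile types. -/
abbrev Assembly (T : Type) := ℤ × ℤ → Option T

/-- `D` is the domain of the assembly `α`. -/
def IsDom {T : Type} (α : Assembly T) (D : Finset (ℤ × ℤ)) : Prop :=
  ∀ p, (α p).isSome ↔ p ∈ D

/-- The strength of the bond between positions `p` and `q` in `α`: it is the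
strength of the common glue if `q - p` is a unit direction and the glue of the
tile at `p` in direction `q - p` matches the glue of the tile at `q` in
direction `p - q`; otherwise `0`. -/
def bond {T : Type} (ts : TileSystem T) (α : Assembly T) (p q : ℤ × ℤ) : ℕ :=
  match α p, α q with
  | some t, some t' =>
      if q - p ∈ dirs ∧ ts.glue t (q - p) = ts.glue t' (p - q)
      then ts.str (ts.glue t (q - p)) else 0
  | _, _ => 0

/-- Two positions of `α` interact if they hold tiles binding with positive strength. -/
def Interacts {T : Type} (ts : TileSystem T) (α : Assembly T) (p q : ℤ × ℤ) : Prop :=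
  0 < bond ts α p q

/-- Total strength of the interacting glues between positions in `A` and
(adjacent) positions in `B`. -/
def strengthBetween {T : Type} (ts : TileSystem T) (α : Assembly T)
    (A B : Finset (ℤ × ℤ)) : ℕ :=
  ∑ p ∈ A, ∑ q ∈ B, bond ts α p q

/-- `α` is `τ`-stable: every partition of its domain into two nonempty parts is
crossed by interacting glues of total strength at least `τ`. -/
def Stable {T : Type} (ts : TileSystem T) (α : Assembly T) (τ : ℕ) : Prop :=
  ∀ D A B : Finset (ℤ × ℤ), IsDom α D → A ∪ B = D → Disjoint A B →
    A.Nonempty → B.Nonempty → τ ≤ strengthBetween ts α A B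

/-- The union of two assemblies (agreeing with `α` wherever `α` is defined). -/
def aunion {T : Type} (α β : Assembly T) : Assembly T :=
  fun p => match α p with
    | some t => some t
    | none => β p

/-- Producibility in the hierarchical model at temperature `τ`: an assembly is
producible if it is a single tile, or the `τ`-stable union of two producible
assemblies with disjoint domains. -/
inductive Producible {T : Type} (ts : TileSystem T) (τ : ℕ) : Assembly T → Prop where
  | single (p : ℤ × ℤ) (t : T) :
      Producible ts τ (fun q => if q = p then some t else none)
  | union {α β : Assembly T} :
      Producible ts τ α → Producible ts τ β →
      (∀ p, α p = none ∨ β p = none) →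
      Stable ts (aunion α β) τ →
      Producible ts τ (aunion α β)

/-- Two assemblies are consistent if they agree wherever both are defined. -/
def Consistent {T : Type} (α β : Assembly T) : Prop :=
  ∀ p t t', α p = some t → β p = some t' → t = t'

/-- `α` is a subassembly of `β`. -/
def Subassembly {T : Type} (α β : Assembly T) : Prop :=
  ∀ p t, α p = some t → β p = some t

/-- A producible assembly is terminal if no producible assembly can stably attach to it. -/
def Terminal {T : Type} (ts : TileSystem T) (τ : ℕ) (α : Assembly T) : Prop :=
  ∀ β : Assembly T, Producible ts τ β → (∀ p, α p = none ∨ β p = none) →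
    ¬ Stable ts (aunion α β) τ

/-- The hierarchical system uniquely produces `α` if the set of producible
terminal assemblies equals `{α}`. -/
def UniquelyProduces {T : Type} (ts : TileSystem T) (τ : ℕ) (α : Assembly T) : Prop :=
  {γ : Assembly T | Producible ts τ γ ∧ Terminal ts τ γ} = {α}

/-- `𝒞` is a partition of the finite set `D`: pairwise disjoint nonempty parts
whose union is `D`. -/
def IsPartition (𝒞 : Finset (Finset (ℤ × ℤ))) (D : Finset (ℤ × ℤ)) : Prop :=
  (∀ C ∈ 𝒞, C.Nonempty) ∧
  (∀ C₁ ∈ 𝒞, ∀ C₂ ∈ 𝒞, C₁ ≠ C₂ → Disjoint C₁ C₂) ∧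
  𝒞.sup id = D

/-- One merge step on partitions of the domain of `α`: replace two distinct
parts whose attachment strength in `α` is at least `τ` by their union. -/
def MergeStep {T : Type} (ts : TileSystem T) (α : Assembly T) (τ : ℕ)
    (𝒞 𝒞' : Finset (Finset (ℤ × ℤ))) : Prop :=
  ∃ C₁ ∈ 𝒞, ∃ C₂ ∈ 𝒞, C₁ ≠ C₂ ∧ τ ≤ strengthBetween ts α C₁ C₂ ∧
    𝒞' = insert (C₁ ∪ C₂) ((𝒞.erase C₁).erase C₂)

/-- The partition of `D` into singletons. -/
def singletonsPart (D : Finset (ℤ × ℤ)) : Finset (Finset (ℤ × ℤ)) :=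
  D.image (fun p => {p})

/-- A merge sequence for `α` (with domain `D`) at temperature `τ`: a sequence of
partitions starting with the singleton partition, each subsequent one obtained
from the previous by a merge step. -/
def IsMergeSeq {T : Type} (ts : TileSystem T) (α : Assembly T) (τ : ℕ)
    (D : Finset (ℤ × ℤ)) (L : List (Finset (Finset (ℤ × ℤ)))) : Prop :=
  L.head? = some (singletonsPart D) ∧ L.Chain' (MergeStep ts α τ)

/-- A full binary tree with leaves labeled by positions. -/
inductive BTree where
  | leaf : ℤ × ℤ → BTree
  | node : BTree → BTree → BTree

/-- The set represented by a node: the set of labels of its leaves. -/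
def BTree.leaves : BTree → Finset (ℤ × ℤ)
  | .leaf x => {x}
  | .node l r => l.leaves ∪ r.leaves

/-- `Υ` is an assembly tree for `α` at temperature `τ`: at every internal node
the children's sets are disjoint and have attachment strength at least `τ` in `α`. -/
def BTree.IsAssemblyTree {T : Type} (ts : TileSystem T) (α : Assembly T) (τ : ℕ) :
    BTree → Prop
  | .leaf _ => True
  | .node l r => Disjoint l.leaves r.leaves ∧
      τ ≤ strengthBetween ts α l.leaves r.leaves ∧
      l.IsAssemblyTree ts α τ ∧ r.IsAssemblyTree ts α τ

/-- The restriction of an assembly to a set of positions. -/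
def restrict {T : Type} (α : Assembly T) (C : Finset (ℤ × ℤ)) : Assembly T :=
  fun p => if p ∈ C then α p else none


section Helpers
variable {T : Type} (ts : TileSystem T) (α : Assembly T)

lemma neg_mem_dirs {d : ℤ × ℤ} (h : d ∈ dirs) : -d ∈ dirs := by
  simp only [dirs, Finset.mem_insert, Finset.mem_singleton] at h ⊢
  rcases h with h|h|h|h <;> subst h <;> simp

lemma bond_comm (p q : ℤ × ℤ) : bond ts α p q = bond ts α q p := by
  unfold bond
  cases hp : α p <;> cases hq : α q <;> try rfl
  rename_i t t'
  dsimp only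
  have hneg : p - q = -(q - p) := by ring
  by_cases h : q - p ∈ dirs ∧ ts.glue t (q - p) = ts.glue t' (p - q)
  · rw [if_pos h, if_pos ⟨by rw [hneg]; exact neg_mem_dirs h.1, h.2.symm⟩, h.2]
  · rw [if_neg h, if_neg]
    intro ⟨h1, h2⟩
    have := neg_mem_dirs h1
    rw [hneg, neg_neg] at this
    exact h ⟨this, h2.symm⟩

lemma sb_comm (A B : Finset (ℤ × ℤ)) :
    strengthBetween ts α A B = strengthBetween ts α B A := by
  unfold strengthBetween
  rw [Finset.sum_comm]
  exact Finset.sum_congr rfl fun q _ => Finset.sum_congr rfl fun p _ => bond_comm ts α p q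

lemma sb_mono {A' A B' B : Finset (ℤ × ℤ)} (hA : A' ⊆ A) (hB : B' ⊆ B) :
    strengthBetween ts α A' B' ≤ strengthBetween ts α A B := by
  unfold strengthBetween
  calc ∑ p ∈ A', ∑ q ∈ B', bond ts α p q
      ≤ ∑ p ∈ A', ∑ q ∈ B, bond ts α p q :=
        Finset.sum_le_sum fun p _ => Finset.sum_le_sum_of_subset hB
    _ ≤ ∑ p ∈ A, ∑ q ∈ B, bond ts α p q := Finset.sum_le_sum_of_subset hA

lemma bond_restrict (C : Finset (ℤ × ℤ)) (p q : ℤ × ℤ) :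
    bond ts (restrict α C) p q = if p ∈ C ∧ q ∈ C then bond ts α p q else 0 := by
  unfold bond restrict
  by_cases hp : p ∈ C <;> by_cases hq : q ∈ C <;>
    simp only [hp, hq, if_true, if_false, true_and, and_true, false_and, and_false] <;>
    first | rfl | (cases α p <;> cases α q <;> rfl) | (cases α q <;> rfl) | (cases α p <;> rfl)

lemma sb_restrict (C : Finset (ℤ × ℤ)) (A B : Finset (ℤ × ℤ)) :
    strengthBetween ts (restrict α C) A B = strengthBetween ts α (A ∩ C) (B ∩ C) := by
  unfold strengthBetween
  simp only [bond_restrict]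
  have h : ∀ p, (∑ q ∈ B, if p ∈ C ∧ q ∈ C then bond ts α p q else 0)
      = if p ∈ C then ∑ q ∈ B ∩ C, bond ts α p q else 0 := by
    intro p; by_cases hp : p ∈ C <;> simp [hp, Finset.sum_ite_mem]
  simp only [h, Finset.sum_ite_mem]

lemma isDom_restrict {C D : Finset (ℤ × ℤ)} (hCD : C ⊆ D) (hD : IsDom α D) :
    IsDom (restrict α C) C := by
  intro p
  unfold restrict
  by_cases hp : p ∈ C <;> simp [hp]
  exact (hD p).mpr (hCD hp)

lemma isDom_unique {β : Assembly T} {D D' : Finset (ℤ × ℤ)} (h : IsDom β D)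
    (h' : IsDom β D') : D = D' := by
  ext p; rw [← h p, h' p]

lemma restrict_union_eq_aunion (C₁ C₂ : Finset (ℤ × ℤ)) :
    restrict α (C₁ ∪ C₂) = aunion (restrict α C₁) (restrict α C₂) := by
  funext p
  unfold restrict aunion
  by_cases h1 : p ∈ C₁ <;> by_cases h2 : p ∈ C₂ <;> simp [h1, h2] <;> cases α p <;> rfl

lemma producible_stable {τ : ℕ} {β : Assembly T} (h : Producible ts τ β) :
    Stable ts β τ := by
  induction h with
  | single p t =>
      intro D A B hdom hun hdis hA hB
      exfalso
      have hD : ∀ q ∈ D, q = p := by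
        intro q hq
        have := (hdom q).mpr hq
        by_contra hne
        simp [hne] at this
      obtain ⟨a, ha⟩ := hA
      obtain ⟨b, hb⟩ := hB
      have ha' : a = p := hD a (hun ▸ Finset.mem_union_left B ha)
      have hb' : b = p := hD b (hun ▸ Finset.mem_union_right A hb)
      exact Finset.disjoint_left.mp hdis ha (ha' ▸ hb'.symm ▸ hb)
  | union _ _ _ hstab _ _ => exact hstab

lemma stable_union {τ : ℕ} {C₁ C₂ D : Finset (ℤ × ℤ)} (hD : IsDom α D)
    (hC₁D : C₁ ⊆ D) (hC₂D : C₂ ⊆ D)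
    (h1 : Stable ts (restrict α C₁) τ) (h2 : Stable ts (restrict α C₂) τ)
    (hcross : τ ≤ strengthBetween ts α C₁ C₂) :
    Stable ts (restrict α (C₁ ∪ C₂)) τ := by
  intro D' A B hdom hun hdis hA hB
  have hD' : D' = C₁ ∪ C₂ :=
    isDom_unique hdom (isDom_restrict α (Finset.union_subset hC₁D hC₂D) hD)
  subst hD'
  have hAsub : A ⊆ C₁ ∪ C₂ := hun ▸ Finset.subset_union_left
  have hBsub : B ⊆ C₁ ∪ C₂ := hun ▸ Finset.subset_union_right
  have key : ∀ C : Finset (ℤ × ℤ), C ⊆ D → Stable ts (restrict α C) τ → C ⊆ C₁ ∪ C₂ →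
      (A ∩ C).Nonempty → (B ∩ C).Nonempty → τ ≤ strengthBetween ts (restrict α (C₁ ∪ C₂)) A B := by
    intro C hCD hst hCsub hAC hBC
    have hunC : (A ∩ C) ∪ (B ∩ C) = C := by
      rw [← Finset.union_inter_distrib_right, hun, Finset.inter_eq_right.mpr hCsub]
    have := hst C (A ∩ C) (B ∩ C) (isDom_restrict α hCD hD) hunC
      (hdis.mono Finset.inter_subset_left Finset.inter_subset_left) hAC hBC
    rw [sb_restrict] at this
    rw [sb_restrict]
    calc τ ≤ strengthBetween ts α (A ∩ C ∩ C) (B ∩ C ∩ C) := this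
      _ ≤ strengthBetween ts α (A ∩ (C₁ ∪ C₂)) (B ∩ (C₁ ∪ C₂)) := by
          apply sb_mono <;>
          · intro x hx
            simp only [Finset.mem_inter] at hx ⊢
            exact ⟨hx.1.1, hCsub hx.2⟩
  by_cases hc1 : (A ∩ C₁).Nonempty ∧ (B ∩ C₁).Nonempty
  · exact key C₁ hC₁D h1 Finset.subset_union_left hc1.1 hc1.2
  by_cases hc2 : (A ∩ C₂).Nonempty ∧ (B ∩ C₂).Nonempty
  · exact key C₂ hC₂D h2 Finset.subset_union_right hc2.1 hc2.2
  -- each Cᵢ lies entirely in A or entirely in B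
  have side : ∀ C : Finset (ℤ × ℤ), C ⊆ C₁ ∪ C₂ → ¬((A ∩ C).Nonempty ∧ (B ∩ C).Nonempty) →
      C ⊆ A ∨ C ⊆ B := by
    intro C hCsub hn
    rw [not_and_or, Finset.not_nonempty_iff_eq_empty, Finset.not_nonempty_iff_eq_empty] at hn
    rcases hn with hn | hn
    · right
      intro x hx
      have hx' : x ∈ A ∪ B := hun.symm ▸ hCsub hx
      rcases Finset.mem_union.mp hx' with h | h
      · exact absurd (Finset.mem_inter.mpr ⟨h, hx⟩) (by simp [hn])
      · exact h
    · left
      intro x hx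
      have hx' : x ∈ A ∪ B := hun.symm ▸ hCsub hx
      rcases Finset.mem_union.mp hx' with h | h
      · exact h
      · exact absurd (Finset.mem_inter.mpr ⟨h, hx⟩) (by simp [hn])
  have s1 := side C₁ Finset.subset_union_left hc1
  have s2 := side C₂ Finset.subset_union_right hc2
  have hsb : strengthBetween ts (restrict α (C₁ ∪ C₂)) A B = strengthBetween ts α A B := by
    rw [sb_restrict, Finset.inter_eq_left.mpr hAsub, Finset.inter_eq_left.mpr hBsub]
  rcases s1 with s1 | s1 <;> rcases s2 with s2 | s2
  · exfalso
    obtain ⟨b, hb⟩ := hB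
    rcases Finset.mem_union.mp (hBsub hb) with h | h
    · exact Finset.disjoint_left.mp hdis (s1 h) hb
    · exact Finset.disjoint_left.mp hdis (s2 h) hb
  · rw [hsb]; exact hcross.trans (sb_mono ts α s1 s2)
  · rw [hsb, sb_comm]; exact hcross.trans (sb_mono ts α s1 s2)
  · exfalso
    obtain ⟨a, ha⟩ := hA
    rcases Finset.mem_union.mp (hAsub ha) with h | h
    · exact Finset.disjoint_left.mp hdis ha (s1 h)
    · exact Finset.disjoint_left.mp hdis ha (s2 h)

lemma BTree.leaves_nonempty : ∀ t : BTree, t.leaves.Nonempty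
  | .leaf x => ⟨x, by simp [BTree.leaves]⟩
  | .node l r => by
      obtain ⟨x, hx⟩ := BTree.leaves_nonempty l
      exact ⟨x, Finset.mem_union_left _ hx⟩

/-- Key lemma for part (a): an assembly (sub)tree is either contained in a
single part or witnesses a mergeable pair. -/
lemma tree_merge {τ : ℕ} {D : Finset (ℤ × ℤ)} {𝒞 : Finset (Finset (ℤ × ℤ))}
    (hpart : IsPartition 𝒞 D) :
    ∀ t : BTree, t.IsAssemblyTree ts α τ → t.leaves ⊆ D →
      (∃ C ∈ 𝒞, t.leaves ⊆ C) ∨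
      (∃ C₁ ∈ 𝒞, ∃ C₂ ∈ 𝒞, C₁ ≠ C₂ ∧ τ ≤ strengthBetween ts α C₁ C₂) := by
  intro t
  induction t with
  | leaf x =>
      intro _ hsub
      left
      have hx : x ∈ D := hsub (by simp [BTree.leaves])
      rw [← hpart.2.2] at hx
      obtain ⟨C, hC, hxC⟩ := Finset.mem_sup.mp hx
      exact ⟨C, hC, by simpa [BTree.leaves] using hxC⟩
  | node l r ihl ihr =>
      intro ht hsub
      obtain ⟨hdis, hstr, hl, hr⟩ := ht
      have hlsub : l.leaves ⊆ D := (Finset.subset_union_left).trans hsub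
      have hrsub : r.leaves ⊆ D := (Finset.subset_union_right).trans hsub
      rcases ihl hl hlsub with ⟨C₁, hC₁, hsub₁⟩ | h
      · rcases ihr hr hrsub with ⟨C₂, hC₂, hsub₂⟩ | h
        · by_cases heq : C₁ = C₂
          · left
            exact ⟨C₁, hC₁, by
              show (BTree.node l r).leaves ⊆ C₁
              rw [BTree.leaves]
              exact Finset.union_subset hsub₁ (heq ▸ hsub₂)⟩
          · right
            exact ⟨C₁, hC₁, C₂, hC₂, heq, hstr.trans (sb_mono ts α hsub₁ hsub₂)⟩
        · right; exact h
      · right; exact h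

lemma singletons_partition (D : Finset (ℤ × ℤ)) : IsPartition (singletonsPart D) D := by
  refine ⟨?_, ?_, ?_⟩
  · intro C hC
    obtain ⟨p, _, rfl⟩ := Finset.mem_image.mp hC
    exact Finset.singleton_nonempty p
  · intro C₁ h₁ C₂ h₂ hne
    obtain ⟨p, _, rfl⟩ := Finset.mem_image.mp h₁
    obtain ⟨q, _, rfl⟩ := Finset.mem_image.mp h₂
    simp only [Finset.disjoint_singleton_right, Finset.mem_singleton]
    intro h; exact hne (by rw [h])
  · ext p
    simp only [Finset.mem_sup, singletonsPart, Finset.mem_image, id]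
    constructor
    · rintro ⟨C, ⟨q, hq, rfl⟩, hp⟩
      simpa using (Finset.mem_singleton.mp hp) ▸ hq
    · intro hp; exact ⟨{p}, ⟨p, hp, rfl⟩, Finset.mem_singleton_self p⟩

lemma merge_preserves_partition {τ : ℕ} {D : Finset (ℤ × ℤ)}
    {𝒞 𝒞' : Finset (Finset (ℤ × ℤ))} (hpart : IsPartition 𝒞 D)
    (hstep : MergeStep ts α τ 𝒞 𝒞') : IsPartition 𝒞' D := by
  obtain ⟨C₁, hC₁, C₂, hC₂, hne, _, rfl⟩ := hstep
  obtain ⟨hnonempty, hdisj, hsup⟩ := hpart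
  have hrec : 𝒞 = insert C₁ (insert C₂ ((𝒞.erase C₁).erase C₂)) := by
    rw [Finset.insert_erase (Finset.mem_erase.mpr ⟨Ne.symm hne, hC₂⟩),
      Finset.insert_erase hC₁]
  refine ⟨?_, ?_, ?_⟩
  · intro C hC
    rcases Finset.mem_insert.mp hC with rfl | hC
    · obtain ⟨x, hx⟩ := hnonempty C₁ hC₁
      exact ⟨x, Finset.mem_union_left _ hx⟩
    · exact hnonempty C (Finset.mem_of_mem_erase (Finset.mem_of_mem_erase hC))
  · intro A hA B hB hAB
    have hmem : ∀ C ∈ (𝒞.erase C₁).erase C₂, C ∈ 𝒞 ∧ C ≠ C₁ ∧ C ≠ C₂ := by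
      intro C hC
      exact ⟨Finset.mem_of_mem_erase (Finset.mem_of_mem_erase hC),
        Finset.ne_of_mem_erase (Finset.mem_of_mem_erase hC), Finset.ne_of_mem_erase hC⟩
    rcases Finset.mem_insert.mp hA with rfl | hA <;> rcases Finset.mem_insert.mp hB with rfl | hB
    · exact absurd rfl hAB
    · obtain ⟨hB𝒞, hB1, hB2⟩ := hmem B hB
      exact Finset.disjoint_union_left.mpr
        ⟨(hdisj C₁ hC₁ B hB𝒞 (Ne.symm hB1)), (hdisj C₂ hC₂ B hB𝒞 (Ne.symm hB2))⟩
    · obtain ⟨hA𝒞, hA1, hA2⟩ := hmem A hA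
      exact (Finset.disjoint_union_left.mpr
        ⟨(hdisj C₁ hC₁ A hA𝒞 (Ne.symm hA1)), (hdisj C₂ hC₂ A hA𝒞 (Ne.symm hA2))⟩).symm
    · exact hdisj A (hmem A hA).1 B (hmem B hB).1 hAB
  · rw [Finset.sup_insert]
    conv_rhs => rw [← hsup, hrec, Finset.sup_insert, Finset.sup_insert]
    simp only [id]
    rw [← sup_assoc]
    rfl

lemma merge_preserves_producible {τ : ℕ} {D : Finset (ℤ × ℤ)} (hD : IsDom α D)
    {𝒞 𝒞' : Finset (Finset (ℤ × ℤ))} (hpart : IsPartition 𝒞 D)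
    (hprod : ∀ C ∈ 𝒞, Producible ts τ (restrict α C))
    (hstep : MergeStep ts α τ 𝒞 𝒞') : ∀ C ∈ 𝒞', Producible ts τ (restrict α C) := by
  obtain ⟨C₁, hC₁, C₂, hC₂, hne, hstr, rfl⟩ := hstep
  intro C hC
  rcases Finset.mem_insert.mp hC with rfl | hC
  · have hdisj : Disjoint C₁ C₂ := hpart.2.1 C₁ hC₁ C₂ hC₂ hne
    have hC₁D : C₁ ⊆ D := hpart.2.2 ▸ Finset.le_sup (f := id) hC₁
    have hC₂D : C₂ ⊆ D := hpart.2.2 ▸ Finset.le_sup (f := id) hC₂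
    rw [restrict_union_eq_aunion]
    refine Producible.union (hprod C₁ hC₁) (hprod C₂ hC₂) ?_ ?_
    · intro p
      unfold restrict
      by_cases h1 : p ∈ C₁
      · right; simp [Finset.disjoint_left.mp hdisj h1]
      · left; simp [h1]
    · rw [← restrict_union_eq_aunion]
      exact stable_union ts α hD hC₁D hC₂D
        (producible_stable ts (hprod C₁ hC₁)) (producible_stable ts (hprod C₂ hC₂)) hstr
  · exact hprod C (Finset.mem_of_mem_erase (Finset.mem_of_mem_erase hC))

/-- Propagating an invariant along a `Chain'`. -/
lemma chain_invariant {γ : Type*} {R : γ → γ → Prop} {P : γ → Prop}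
    (hP : ∀ a b, P a → R a b → P b) :
    ∀ L : List γ, L.Chain' R → ∀ a, L.head? = some a → P a → ∀ b ∈ L, P b := by
  intro L
  induction L with
  | nil => intro _ a _ _ b hb; simp at hb
  | cons x l ih =>
      intro hch a ha hPa b hb
      simp only [List.head?_cons, Option.some.injEq] at ha
      subst ha
      rcases List.mem_cons.mp hb with rfl | hb
      · exact hPa
      · cases l with
        | nil => simp at hb
        | cons y l' =>
            obtain ⟨hxy, hch'⟩ := List.isChain_cons_cons.mp hch
            exact ih hch' y rfl (hP x y hPa hxy) b hb

lemma mem_of_getLast?_eq {γ : Type*} {l : List γ} {a : γ} (h : l.getLast? = some a) :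
    a ∈ l := by
  cases l with
  | nil => simp at h
  | cons x l' =>
      rw [List.getLast?_eq_getLast (l := x :: l') (by simp)] at h
      have := List.getLast_mem (l := x :: l') (by simp)
      rwa [Option.some_inj.mp h] at this

end Helpers

/-- Let `α` be producible at temperature `τ`, realized by an
assembly tree `Υ` (a hierarchical division of `dom α` in which the children of
each internal node attach with strength at least `τ`).  Then: (a) every
partition of `dom α` other than `{dom α}` contains a mergeable pair (two parts
with attachment strength ≥ τ); (b) the merges performed by the greedy process
themselves determine assembly trees — every part of every partition occurring
in a merge sequence is a producible subassembly of `α`; hence (c) every maximal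
merge sequence terminates with the partition `{dom α}`, so the greedy process
is a correct decision procedure for producibility of `α`. -/
theorem greedy_merging_correct {T : Type} [Fintype T] (ts : TileSystem T)
    (τ : ℕ) (hτ : 0 < τ) (α : Assembly T)
    (D : Finset (ℤ × ℤ)) (hD : IsDom α D) (hne : D.Nonempty)
    (Υ : BTree) (hΥ : Υ.IsAssemblyTree ts α τ) (hroot : Υ.leaves = D) :
    (∀ 𝒞 : Finset (Finset (ℤ × ℤ)), IsPartition 𝒞 D → 𝒞 ≠ {D} →
      ∃ C₁ ∈ 𝒞, ∃ C₂ ∈ 𝒞, C₁ ≠ C₂ ∧ τ ≤ strengthBetween ts α C₁ C₂) ∧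
    (∀ (L : List (Finset (Finset (ℤ × ℤ)))) (𝒞 : Finset (Finset (ℤ × ℤ))),
      IsMergeSeq ts α τ D L → 𝒞 ∈ L →
      ∀ C ∈ 𝒞, Producible ts τ (restrict α C)) ∧
    (∀ (L : List (Finset (Finset (ℤ × ℤ)))) (𝒞 : Finset (Finset (ℤ × ℤ))),
      IsMergeSeq ts α τ D L → L.getLast? = some 𝒞 →
      (∀ 𝒞', ¬ MergeStep ts α τ 𝒞 𝒞') → 𝒞 = {D}) := by
  have parta : ∀ 𝒞 : Finset (Finset (ℤ × ℤ)), IsPartition 𝒞 D → 𝒞 ≠ {D} →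
      ∃ C₁ ∈ 𝒞, ∃ C₂ ∈ 𝒞, C₁ ≠ C₂ ∧ τ ≤ strengthBetween ts α C₁ C₂ := by
    intro 𝒞 hpart hne𝒞
    rcases tree_merge ts α hpart Υ hΥ (hroot ▸ Finset.Subset.refl D) with ⟨C, hC, hsub⟩ | h
    · exfalso
      have hCD : C ⊆ D := hpart.2.2 ▸ Finset.le_sup (f := id) hC
      have hCeq : C = D := Finset.Subset.antisymm hCD (hroot ▸ hsub)
      subst hCeq
      apply hne𝒞
      ext C'
      simp only [Finset.mem_singleton]
      constructor
      · intro hC'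
        by_contra hne'
        have hd := hpart.2.1 C' hC' C hC hne'
        obtain ⟨x, hx⟩ := hpart.1 C' hC'
        have hsub' : C' ⊆ C := hpart.2.2 ▸ Finset.le_sup (f := id) hC'
        exact Finset.disjoint_left.mp hd hx (hsub' hx)
      · rintro rfl; exact hC
    · exact h
  have invariant : ∀ (L : List (Finset (Finset (ℤ × ℤ)))) (𝒞 : Finset (Finset (ℤ × ℤ))),
      IsMergeSeq ts α τ D L → 𝒞 ∈ L →
      IsPartition 𝒞 D ∧ ∀ C ∈ 𝒞, Producible ts τ (restrict α C) := by
    rintro L 𝒞 ⟨hhead, hchain⟩ hmem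
    refine chain_invariant
      (P := fun 𝒟 => IsPartition 𝒟 D ∧ ∀ C ∈ 𝒟, Producible ts τ (restrict α C))
      ?_ L hchain _ hhead ?_ 𝒞 hmem
    · rintro a b ⟨hpa, hprod⟩ hstep
      exact ⟨merge_preserves_partition ts α hpa hstep,
        merge_preserves_producible ts α hD hpa hprod hstep⟩
    · refine ⟨singletons_partition D, ?_⟩
      intro C hC
      obtain ⟨p, hp, rfl⟩ := Finset.mem_image.mp hC
      obtain ⟨t, ht⟩ := Option.isSome_iff_exists.mp ((hD p).mpr hp)
      have hres : restrict α ({p} : Finset (ℤ × ℤ)) =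
          fun q => if q = p then some t else none := by
        funext q
        unfold restrict
        by_cases hq : q = p <;> simp [hq, ht]
      exact hres ▸ Producible.single p t
  refine ⟨parta, fun L 𝒞 hms hm => (invariant L 𝒞 hms hm).2, ?_⟩
  intro L 𝒞 hms hlast hnomerge
  have hmem : 𝒞 ∈ L := mem_of_getLast?_eq hlast
  have hpart := (invariant L 𝒞 hms hmem).1
  by_contra hne𝒞
  obtain ⟨C₁, hC₁, C₂, hC₂, hne', hstr⟩ := parta 𝒞 hpart hne𝒞
  exact hnomerge _ ⟨C₁, hC₁, C₂, hC₂, hne', hstr, rfl⟩
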